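/- Let 𝓕 ⊆ ℕ² be a finitely generated submonoid and A ⊆ 𝓕 a finite set with 0 ∉ A. If 𝓕 \ A is closed under addition, then 𝓕 \ A is a finitely generated submonoid of ℕ². -/

import Mathlib

open AddSubmonoid

private lemma split_list (ν : ℕ × ℕ →+ ℕ) (M B : ℕ) :
    ∀ (L : List (ℕ × ℕ)) (c : ℕ), (∀ a ∈ L, ν a ≤ M) → c ≤ B → B < c + ν L.sum →
    ∃ L₁ L₂ : List (ℕ × ℕ), L.Perm (L₁ ++ L₂) ∧ B < c + ν L₁.sum ∧ c + ν L₁.sum ≤ B + M := by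
  intro L
  induction L with
  | nil => intro c _ hc h; simp at h; omega
  | cons a L ih =>
    intro c hmem hc h
    have ha : ν a ≤ M := hmem a List.mem_cons_self
    by_cases hB : B < c + ν a
    · refine ⟨[a], L, by simp, ?_, ?_⟩ <;> simp <;> omega
    · push_neg at hB
      have h' : B < (c + ν a) + ν L.sum := by
        rw [List.sum_cons, map_add] at h; omega
      obtain ⟨L₁, L₂, hperm, h1, h2⟩ :=
        ih (c + ν a) (fun b hb => hmem b (List.mem_cons_of_mem a hb)) hB h'
      refine ⟨a :: L₁, L₂, ?_, ?_, ?_⟩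
      · exact hperm.cons a
      · rw [List.sum_cons, map_add]; omega
      · rw [List.sum_cons, map_add]; omega

/-- If `𝓕 ⊆ ℕ²` is a finitely generated submonoid, `A ⊆ 𝓕` finite with `0 ∉ A`,
and `𝓕 \ A` is closed under addition, then `𝓕 \ A` is a finitely generated
submonoid of `ℕ²`. -/
theorem stmt8 (F : AddSubmonoid (ℕ × ℕ)) (hFG : F.FG)
    (A : Set (ℕ × ℕ)) (hA : A ⊆ F) (hAfin : A.Finite) (h0 : (0 : ℕ × ℕ) ∉ A)
    (hclosed : ∀ x ∈ (F : Set (ℕ × ℕ)) \ A, ∀ y ∈ (F : Set (ℕ × ℕ)) \ A,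
        x + y ∈ (F : Set (ℕ × ℕ)) \ A) :
    ∃ F' : AddSubmonoid (ℕ × ℕ),
      (F' : Set (ℕ × ℕ)) = (F : Set (ℕ × ℕ)) \ A ∧ F'.FG := by
  classical
  obtain ⟨S, hS⟩ := hFG
  set ν : ℕ × ℕ →+ ℕ := (AddMonoidHom.fst ℕ ℕ) + (AddMonoidHom.snd ℕ ℕ) with hνdef
  have hν : ∀ p : ℕ × ℕ, ν p = p.1 + p.2 := fun p => rfl
  set B : ℕ := hAfin.toFinset.sup ν with hBdef
  have hBle : ∀ a ∈ A, ν a ≤ B := fun a ha =>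
    Finset.le_sup (hAfin.mem_toFinset.2 ha)
  set M : ℕ := S.sup ν with hMdef
  have hMle : ∀ s ∈ (S : Set (ℕ × ℕ)), ν s ≤ M := fun s hs => Finset.le_sup hs
  set C : ℕ := 2 * B + M + 1 with hCdef
  refine ⟨{ carrier := (F : Set (ℕ × ℕ)) \ A,
            zero_mem' := ⟨F.zero_mem, h0⟩,
            add_mem' := fun hx hy => hclosed _ hx _ hy }, rfl, ?_⟩
  rw [AddSubmonoid.fg_iff]
  refine ⟨{x | x ∈ (F : Set (ℕ × ℕ)) \ A ∧ ν x ≤ C}, ?_, ?_⟩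
  · apply le_antisymm
    · exact AddSubmonoid.closure_le.2 fun x hx => hx.1
    · intro x hx
      have key : ∀ n : ℕ, ∀ x : ℕ × ℕ, x ∈ (F : Set (ℕ × ℕ)) \ A → ν x ≤ n →
          x ∈ AddSubmonoid.closure {x | x ∈ (F : Set (ℕ × ℕ)) \ A ∧ ν x ≤ C} := by
        intro n
        induction n using Nat.strong_induction_on with
        | _ n ih =>
          intro x hx hxn
          by_cases hxC : ν x ≤ C
          · exact AddSubmonoid.subset_closure ⟨hx, hxC⟩
          · push_neg at hxC
            have hxF : x ∈ AddSubmonoid.closure (S : Set (ℕ × ℕ)) := by rw [hS]; exact hx.1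
            obtain ⟨L, hLmem, hLsum⟩ := AddSubmonoid.exists_list_of_mem_closure hxF
            obtain ⟨L₁, L₂, hperm, h1, h2⟩ :=
              split_list ν M B L 0 (fun a haL => hMle a (hLmem a haL)) (Nat.zero_le _)
                (by rw [hLsum]; omega)
            simp only [Nat.zero_add] at h1 h2
            set u := L₁.sum with hu
            set v := L₂.sum with hv
            have hxuv : x = u + v := by
              rw [← hLsum, hperm.sum_eq, List.sum_append]
            have hmemS : ∀ a, a ∈ L₁ ++ L₂ → a ∈ F := by
              intro a haL
              have : a ∈ L := hperm.mem_iff.2 haL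
              have := hLmem a this
              rw [← hS]; exact AddSubmonoid.subset_closure this
            have huF : u ∈ F := list_sum_mem fun a haL =>
              hmemS a (List.mem_append_left _ haL)
            have hvF : v ∈ F := list_sum_mem fun a haL =>
              hmemS a (List.mem_append_right _ haL)
            have hνx : ν x = ν u + ν v := by rw [hxuv, map_add]
            have huA : u ∉ A := fun hmem => absurd (hBle u hmem) (by omega)
            have hvB : B < ν v := by omega
            have hvA : v ∉ A := fun hmem => absurd (hBle v hmem) (by omega)
            have huG : u ∈ AddSubmonoid.closure {x | x ∈ (F : Set (ℕ × ℕ)) \ A ∧ ν x ≤ C} :=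
              AddSubmonoid.subset_closure ⟨⟨huF, huA⟩, by omega⟩
            have hvG : v ∈ AddSubmonoid.closure {x | x ∈ (F : Set (ℕ × ℕ)) \ A ∧ ν x ≤ C} := by
              refine ih (n - 1) (by omega) v ⟨hvF, hvA⟩ (by omega)
            rw [hxuv]; exact add_mem huG hvG
      exact key (ν x) x hx le_rfl
  · apply Set.Finite.subset (Set.finite_Icc ((0, 0) : ℕ × ℕ) (C, C))
    intro x hx
    obtain ⟨-, hxC⟩ := hx
    rw [hν] at hxC
    constructor <;> constructor <;> simp <;> omega
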